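/- Let b, c, x₃ be complex numbers with bc ≠ 0. The 9×9 matrix given in block form [1], [[1,0],[0,1]], [[1−bc, 0, b/c],[−x₃c², 1, x₃],[c², 0, 0]], [[1−bc, b],[c, 0]], [1] satisfies the braid relation R̂₁R̂₂R̂₁ = R̂₂R̂₁R̂₂, and its characteristic polynomial is (t−1)⁷(t+bc)². -/
import Mathlib


open Matrix Polynomial

noncomputable section

/-- `R̂ ⊗ 1` acting on `V ⊗ V ⊗ V` with `V = ℂ^3`. -/
def R1 (R : Matrix (Fin 3 × Fin 3) (Fin 3 × Fin 3) ℂ) :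
    Matrix (Fin 3 × Fin 3 × Fin 3) (Fin 3 × Fin 3 × Fin 3) ℂ :=
  fun p q => R (p.1, p.2.1) (q.1, q.2.1) * (if p.2.2 = q.2.2 then 1 else 0)

/-- `1 ⊗ R̂` acting on `V ⊗ V ⊗ V` with `V = ℂ^3`. -/
def R2 (R : Matrix (Fin 3 × Fin 3) (Fin 3 × Fin 3) ℂ) :
    Matrix (Fin 3 × Fin 3 × Fin 3) (Fin 3 × Fin 3 × Fin 3) ℂ :=
  fun p q => (if p.1 = q.1 then 1 else 0) * R (p.2.1, p.2.2) (q.2.1, q.2.2)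

/-- The braid relation `R̂₁R̂₂R̂₁ = R̂₂R̂₁R̂₂`. -/
def Braid (R : Matrix (Fin 3 × Fin 3) (Fin 3 × Fin 3) ℂ) : Prop :=
  R1 R * R2 R * R1 R = R2 R * R1 R * R2 R

/-- position within the charge-1 sector: |10⟩, |01⟩. -/
def f1 (p : Fin 3 × Fin 3) : Fin 2 := if p = (1, 0) then 0 else 1

/-- position within the charge-2 sector: |20⟩, |11⟩, |02⟩. -/
def f2 (p : Fin 3 × Fin 3) : Fin 3 := if p = (2, 0) then 0 else if p = (1, 1) then 1 else 2

/-- position within the charge-3 sector: |21⟩, |12⟩. -/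
def f3 (p : Fin 3 × Fin 3) : Fin 2 := if p = (2, 1) then 0 else 1

/-- The 9×9 matrix with blocks of sizes 1,2,3,2,1 on the graded basis
|00⟩,|10⟩,|01⟩,|20⟩,|11⟩,|02⟩,|21⟩,|12⟩,|22⟩. -/
def blockR (b0 : ℂ) (B1 : Matrix (Fin 2) (Fin 2) ℂ) (B2 : Matrix (Fin 3) (Fin 3) ℂ)
    (B3 : Matrix (Fin 2) (Fin 2) ℂ) (b4 : ℂ) : Matrix (Fin 3 × Fin 3) (Fin 3 × Fin 3) ℂ :=
  fun p q =>
    if (p.1 : ℕ) + (p.2 : ℕ) ≠ (q.1 : ℕ) + (q.2 : ℕ) then 0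
    else if (p.1 : ℕ) + (p.2 : ℕ) = 0 then b0
    else if (p.1 : ℕ) + (p.2 : ℕ) = 1 then B1 (f1 p) (f1 q)
    else if (p.1 : ℕ) + (p.2 : ℕ) = 2 then B2 (f2 p) (f2 q)
    else if (p.1 : ℕ) + (p.2 : ℕ) = 3 then B3 (f3 p) (f3 q)
    else b4


namespace Sol521Aux

/-- The solution matrix with `b = g * c` substituted. -/
def Rm (g c x3 : ℂ) : Matrix (Fin 3 × Fin 3) (Fin 3 × Fin 3) ℂ :=
  blockR 1 1 !![1 - g * c * c, 0, g; -x3 * c ^ 2, 1, x3; c ^ 2, 0, 0]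
    !![1 - g * c * c, g * c; c, 0] 1

lemma lhs_entry (R : Matrix (Fin 3 × Fin 3) (Fin 3 × Fin 3) ℂ) (i j k l m n : Fin 3) :
    (R1 R * R2 R * R1 R) (i,j,k) (l,m,n) =
      ∑ a : Fin 3, ∑ e : Fin 3, ∑ b : Fin 3,
        R (i, j) (a, b) * R (b, k) (e, n) * R (a, e) (l, m) := by
  simp [Matrix.mul_apply, R1, R2, Fintype.sum_prod_type, mul_ite, ite_mul,
    Finset.mul_sum, Finset.sum_mul]

lemma rhs_entry (R : Matrix (Fin 3 × Fin 3) (Fin 3 × Fin 3) ℂ) (i j k l m n : Fin 3) :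
    (R2 R * R1 R * R2 R) (i,j,k) (l,m,n) =
      ∑ a : Fin 3, ∑ e : Fin 3, ∑ b : Fin 3,
        R (j, k) (b, e) * R (i, b) (l, a) * R (a, e) (m, n) := by
  simp [Matrix.mul_apply, R1, R2, Fintype.sum_prod_type, mul_ite, ite_mul,
    Finset.mul_sum, Finset.sum_mul]

lemma chargeRm (g c x3 : ℂ) (p q : Fin 3 × Fin 3)
    (h : (p.1 : ℕ) + (p.2 : ℕ) ≠ (q.1 : ℕ) + (q.2 : ℕ)) : Rm g c x3 p q = 0 := by
  simp [Rm, blockR, h]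

lemma lhs_zero (g c x3 : ℂ) (i j k l m n : Fin 3)
    (h : (i : ℕ) + (j : ℕ) + (k : ℕ) ≠ (l : ℕ) + (m : ℕ) + (n : ℕ)) :
    (∑ a : Fin 3, ∑ e : Fin 3, ∑ b : Fin 3,
        Rm g c x3 (i, j) (a, b) * Rm g c x3 (b, k) (e, n) * Rm g c x3 (a, e) (l, m)) = 0 := by
  refine Finset.sum_eq_zero fun a _ => Finset.sum_eq_zero fun e _ => Finset.sum_eq_zero fun b _ => ?_
  by_cases h1 : (i : ℕ) + (j : ℕ) = (a : ℕ) + (b : ℕ)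
  · by_cases h2 : (b : ℕ) + (k : ℕ) = (e : ℕ) + (n : ℕ)
    · have h3 : (a : ℕ) + (e : ℕ) ≠ (l : ℕ) + (m : ℕ) := by omega
      rw [chargeRm g c x3 (a, e) (l, m) h3, mul_zero]
    · rw [chargeRm g c x3 (b, k) (e, n) h2, mul_zero, zero_mul]
  · rw [chargeRm g c x3 (i, j) (a, b) h1, zero_mul, zero_mul]

lemma rhs_zero (g c x3 : ℂ) (i j k l m n : Fin 3)
    (h : (i : ℕ) + (j : ℕ) + (k : ℕ) ≠ (l : ℕ) + (m : ℕ) + (n : ℕ)) :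
    (∑ a : Fin 3, ∑ e : Fin 3, ∑ b : Fin 3,
        Rm g c x3 (j, k) (b, e) * Rm g c x3 (i, b) (l, a) * Rm g c x3 (a, e) (m, n)) = 0 := by
  refine Finset.sum_eq_zero fun a _ => Finset.sum_eq_zero fun e _ => Finset.sum_eq_zero fun b _ => ?_
  by_cases h1 : (j : ℕ) + (k : ℕ) = (b : ℕ) + (e : ℕ)
  · by_cases h2 : (i : ℕ) + (b : ℕ) = (l : ℕ) + (a : ℕ)
    · have h3 : (a : ℕ) + (e : ℕ) ≠ (m : ℕ) + (n : ℕ) := by omega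
      rw [chargeRm g c x3 (a, e) (m, n) h3, mul_zero]
    · rw [chargeRm g c x3 (i, b) (l, a) h2, mul_zero, zero_mul]
  · rw [chargeRm g c x3 (j, k) (b, e) h1, zero_mul, zero_mul]

lemma hE0 (g c x3 : ℂ) : Rm g c x3 (0,0) (0,0) = 1 := by
  simp [Rm, blockR, f1, f2, f3, Prod.ext_iff]
lemma hE1 (g c x3 : ℂ) : Rm g c x3 (0,0) (0,1) = 0 := by
  simp [Rm, blockR, f1, f2, f3, Prod.ext_iff]
lemma hE2 (g c x3 : ℂ) : Rm g c x3 (0,0) (0,2) = 0 := by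
  simp [Rm, blockR, f1, f2, f3, Prod.ext_iff]
lemma hE3 (g c x3 : ℂ) : Rm g c x3 (0,0) (1,0) = 0 := by
  simp [Rm, blockR, f1, f2, f3, Prod.ext_iff]
lemma hE4 (g c x3 : ℂ) : Rm g c x3 (0,0) (1,1) = 0 := by
  simp [Rm, blockR, f1, f2, f3, Prod.ext_iff]
lemma hE5 (g c x3 : ℂ) : Rm g c x3 (0,0) (1,2) = 0 := by
  simp [Rm, blockR, f1, f2, f3, Prod.ext_iff]
lemma hE6 (g c x3 : ℂ) : Rm g c x3 (0,0) (2,0) = 0 := by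
  simp [Rm, blockR, f1, f2, f3, Prod.ext_iff]
lemma hE7 (g c x3 : ℂ) : Rm g c x3 (0,0) (2,1) = 0 := by
  simp [Rm, blockR, f1, f2, f3, Prod.ext_iff]
lemma hE8 (g c x3 : ℂ) : Rm g c x3 (0,0) (2,2) = 0 := by
  simp [Rm, blockR, f1, f2, f3, Prod.ext_iff]
lemma hE9 (g c x3 : ℂ) : Rm g c x3 (0,1) (0,0) = 0 := by
  simp [Rm, blockR, f1, f2, f3, Prod.ext_iff]
lemma hE10 (g c x3 : ℂ) : Rm g c x3 (0,1) (0,1) = 1 := by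
  simp [Rm, blockR, f1, f2, f3, Prod.ext_iff]
lemma hE11 (g c x3 : ℂ) : Rm g c x3 (0,1) (0,2) = 0 := by
  simp [Rm, blockR, f1, f2, f3, Prod.ext_iff]
lemma hE12 (g c x3 : ℂ) : Rm g c x3 (0,1) (1,0) = 0 := by
  simp [Rm, blockR, f1, f2, f3, Prod.ext_iff]
lemma hE13 (g c x3 : ℂ) : Rm g c x3 (0,1) (1,1) = 0 := by
  simp [Rm, blockR, f1, f2, f3, Prod.ext_iff]
lemma hE14 (g c x3 : ℂ) : Rm g c x3 (0,1) (1,2) = 0 := by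
  simp [Rm, blockR, f1, f2, f3, Prod.ext_iff]
lemma hE15 (g c x3 : ℂ) : Rm g c x3 (0,1) (2,0) = 0 := by
  simp [Rm, blockR, f1, f2, f3, Prod.ext_iff]
lemma hE16 (g c x3 : ℂ) : Rm g c x3 (0,1) (2,1) = 0 := by
  simp [Rm, blockR, f1, f2, f3, Prod.ext_iff]
lemma hE17 (g c x3 : ℂ) : Rm g c x3 (0,1) (2,2) = 0 := by
  simp [Rm, blockR, f1, f2, f3, Prod.ext_iff]
lemma hE18 (g c x3 : ℂ) : Rm g c x3 (0,2) (0,0) = 0 := by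
  simp [Rm, blockR, f1, f2, f3, Prod.ext_iff]
lemma hE19 (g c x3 : ℂ) : Rm g c x3 (0,2) (0,1) = 0 := by
  simp [Rm, blockR, f1, f2, f3, Prod.ext_iff]
lemma hE20 (g c x3 : ℂ) : Rm g c x3 (0,2) (0,2) = 0 := by
  simp [Rm, blockR, f1, f2, f3, Prod.ext_iff]
lemma hE21 (g c x3 : ℂ) : Rm g c x3 (0,2) (1,0) = 0 := by
  simp [Rm, blockR, f1, f2, f3, Prod.ext_iff]
lemma hE22 (g c x3 : ℂ) : Rm g c x3 (0,2) (1,1) = 0 := by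
  simp [Rm, blockR, f1, f2, f3, Prod.ext_iff]
lemma hE23 (g c x3 : ℂ) : Rm g c x3 (0,2) (1,2) = 0 := by
  simp [Rm, blockR, f1, f2, f3, Prod.ext_iff]
lemma hE24 (g c x3 : ℂ) : Rm g c x3 (0,2) (2,0) = c ^ 2 := by
  simp [Rm, blockR, f1, f2, f3, Prod.ext_iff]
lemma hE25 (g c x3 : ℂ) : Rm g c x3 (0,2) (2,1) = 0 := by
  simp [Rm, blockR, f1, f2, f3, Prod.ext_iff]
lemma hE26 (g c x3 : ℂ) : Rm g c x3 (0,2) (2,2) = 0 := by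
  simp [Rm, blockR, f1, f2, f3, Prod.ext_iff]
lemma hE27 (g c x3 : ℂ) : Rm g c x3 (1,0) (0,0) = 0 := by
  simp [Rm, blockR, f1, f2, f3, Prod.ext_iff]
lemma hE28 (g c x3 : ℂ) : Rm g c x3 (1,0) (0,1) = 0 := by
  simp [Rm, blockR, f1, f2, f3, Prod.ext_iff]
lemma hE29 (g c x3 : ℂ) : Rm g c x3 (1,0) (0,2) = 0 := by
  simp [Rm, blockR, f1, f2, f3, Prod.ext_iff]
lemma hE30 (g c x3 : ℂ) : Rm g c x3 (1,0) (1,0) = 1 := by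
  simp [Rm, blockR, f1, f2, f3, Prod.ext_iff]
lemma hE31 (g c x3 : ℂ) : Rm g c x3 (1,0) (1,1) = 0 := by
  simp [Rm, blockR, f1, f2, f3, Prod.ext_iff]
lemma hE32 (g c x3 : ℂ) : Rm g c x3 (1,0) (1,2) = 0 := by
  simp [Rm, blockR, f1, f2, f3, Prod.ext_iff]
lemma hE33 (g c x3 : ℂ) : Rm g c x3 (1,0) (2,0) = 0 := by
  simp [Rm, blockR, f1, f2, f3, Prod.ext_iff]
lemma hE34 (g c x3 : ℂ) : Rm g c x3 (1,0) (2,1) = 0 := by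
  simp [Rm, blockR, f1, f2, f3, Prod.ext_iff]
lemma hE35 (g c x3 : ℂ) : Rm g c x3 (1,0) (2,2) = 0 := by
  simp [Rm, blockR, f1, f2, f3, Prod.ext_iff]
lemma hE36 (g c x3 : ℂ) : Rm g c x3 (1,1) (0,0) = 0 := by
  simp [Rm, blockR, f1, f2, f3, Prod.ext_iff]
lemma hE37 (g c x3 : ℂ) : Rm g c x3 (1,1) (0,1) = 0 := by
  simp [Rm, blockR, f1, f2, f3, Prod.ext_iff]
lemma hE38 (g c x3 : ℂ) : Rm g c x3 (1,1) (0,2) = x3 := by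
  simp [Rm, blockR, f1, f2, f3, Prod.ext_iff]
lemma hE39 (g c x3 : ℂ) : Rm g c x3 (1,1) (1,0) = 0 := by
  simp [Rm, blockR, f1, f2, f3, Prod.ext_iff]
lemma hE40 (g c x3 : ℂ) : Rm g c x3 (1,1) (1,1) = 1 := by
  simp [Rm, blockR, f1, f2, f3, Prod.ext_iff]
lemma hE41 (g c x3 : ℂ) : Rm g c x3 (1,1) (1,2) = 0 := by
  simp [Rm, blockR, f1, f2, f3, Prod.ext_iff]
lemma hE42 (g c x3 : ℂ) : Rm g c x3 (1,1) (2,0) = -x3 * c ^ 2 := by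
  simp [Rm, blockR, f1, f2, f3, Prod.ext_iff]
lemma hE43 (g c x3 : ℂ) : Rm g c x3 (1,1) (2,1) = 0 := by
  simp [Rm, blockR, f1, f2, f3, Prod.ext_iff]
lemma hE44 (g c x3 : ℂ) : Rm g c x3 (1,1) (2,2) = 0 := by
  simp [Rm, blockR, f1, f2, f3, Prod.ext_iff]
lemma hE45 (g c x3 : ℂ) : Rm g c x3 (1,2) (0,0) = 0 := by
  simp [Rm, blockR, f1, f2, f3, Prod.ext_iff]
lemma hE46 (g c x3 : ℂ) : Rm g c x3 (1,2) (0,1) = 0 := by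
  simp [Rm, blockR, f1, f2, f3, Prod.ext_iff]
lemma hE47 (g c x3 : ℂ) : Rm g c x3 (1,2) (0,2) = 0 := by
  simp [Rm, blockR, f1, f2, f3, Prod.ext_iff]
lemma hE48 (g c x3 : ℂ) : Rm g c x3 (1,2) (1,0) = 0 := by
  simp [Rm, blockR, f1, f2, f3, Prod.ext_iff]
lemma hE49 (g c x3 : ℂ) : Rm g c x3 (1,2) (1,1) = 0 := by
  simp [Rm, blockR, f1, f2, f3, Prod.ext_iff]
lemma hE50 (g c x3 : ℂ) : Rm g c x3 (1,2) (1,2) = 0 := by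
  simp [Rm, blockR, f1, f2, f3, Prod.ext_iff]
lemma hE51 (g c x3 : ℂ) : Rm g c x3 (1,2) (2,0) = 0 := by
  simp [Rm, blockR, f1, f2, f3, Prod.ext_iff]
lemma hE52 (g c x3 : ℂ) : Rm g c x3 (1,2) (2,1) = c := by
  simp [Rm, blockR, f1, f2, f3, Prod.ext_iff]
lemma hE53 (g c x3 : ℂ) : Rm g c x3 (1,2) (2,2) = 0 := by
  simp [Rm, blockR, f1, f2, f3, Prod.ext_iff]
lemma hE54 (g c x3 : ℂ) : Rm g c x3 (2,0) (0,0) = 0 := by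
  simp [Rm, blockR, f1, f2, f3, Prod.ext_iff]
lemma hE55 (g c x3 : ℂ) : Rm g c x3 (2,0) (0,1) = 0 := by
  simp [Rm, blockR, f1, f2, f3, Prod.ext_iff]
lemma hE56 (g c x3 : ℂ) : Rm g c x3 (2,0) (0,2) = g := by
  simp [Rm, blockR, f1, f2, f3, Prod.ext_iff]
lemma hE57 (g c x3 : ℂ) : Rm g c x3 (2,0) (1,0) = 0 := by
  simp [Rm, blockR, f1, f2, f3, Prod.ext_iff]
lemma hE58 (g c x3 : ℂ) : Rm g c x3 (2,0) (1,1) = 0 := by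
  simp [Rm, blockR, f1, f2, f3, Prod.ext_iff]
lemma hE59 (g c x3 : ℂ) : Rm g c x3 (2,0) (1,2) = 0 := by
  simp [Rm, blockR, f1, f2, f3, Prod.ext_iff]
lemma hE60 (g c x3 : ℂ) : Rm g c x3 (2,0) (2,0) = 1 - g * c * c := by
  simp [Rm, blockR, f1, f2, f3, Prod.ext_iff]
lemma hE61 (g c x3 : ℂ) : Rm g c x3 (2,0) (2,1) = 0 := by
  simp [Rm, blockR, f1, f2, f3, Prod.ext_iff]
lemma hE62 (g c x3 : ℂ) : Rm g c x3 (2,0) (2,2) = 0 := by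
  simp [Rm, blockR, f1, f2, f3, Prod.ext_iff]
lemma hE63 (g c x3 : ℂ) : Rm g c x3 (2,1) (0,0) = 0 := by
  simp [Rm, blockR, f1, f2, f3, Prod.ext_iff]
lemma hE64 (g c x3 : ℂ) : Rm g c x3 (2,1) (0,1) = 0 := by
  simp [Rm, blockR, f1, f2, f3, Prod.ext_iff]
lemma hE65 (g c x3 : ℂ) : Rm g c x3 (2,1) (0,2) = 0 := by
  simp [Rm, blockR, f1, f2, f3, Prod.ext_iff]
lemma hE66 (g c x3 : ℂ) : Rm g c x3 (2,1) (1,0) = 0 := by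
  simp [Rm, blockR, f1, f2, f3, Prod.ext_iff]
lemma hE67 (g c x3 : ℂ) : Rm g c x3 (2,1) (1,1) = 0 := by
  simp [Rm, blockR, f1, f2, f3, Prod.ext_iff]
lemma hE68 (g c x3 : ℂ) : Rm g c x3 (2,1) (1,2) = g * c := by
  simp [Rm, blockR, f1, f2, f3, Prod.ext_iff]
lemma hE69 (g c x3 : ℂ) : Rm g c x3 (2,1) (2,0) = 0 := by
  simp [Rm, blockR, f1, f2, f3, Prod.ext_iff]
lemma hE70 (g c x3 : ℂ) : Rm g c x3 (2,1) (2,1) = 1 - g * c * c := by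
  simp [Rm, blockR, f1, f2, f3, Prod.ext_iff]
lemma hE71 (g c x3 : ℂ) : Rm g c x3 (2,1) (2,2) = 0 := by
  simp [Rm, blockR, f1, f2, f3, Prod.ext_iff]
lemma hE72 (g c x3 : ℂ) : Rm g c x3 (2,2) (0,0) = 0 := by
  simp [Rm, blockR, f1, f2, f3, Prod.ext_iff]
lemma hE73 (g c x3 : ℂ) : Rm g c x3 (2,2) (0,1) = 0 := by
  simp [Rm, blockR, f1, f2, f3, Prod.ext_iff]
lemma hE74 (g c x3 : ℂ) : Rm g c x3 (2,2) (0,2) = 0 := by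
  simp [Rm, blockR, f1, f2, f3, Prod.ext_iff]
lemma hE75 (g c x3 : ℂ) : Rm g c x3 (2,2) (1,0) = 0 := by
  simp [Rm, blockR, f1, f2, f3, Prod.ext_iff]
lemma hE76 (g c x3 : ℂ) : Rm g c x3 (2,2) (1,1) = 0 := by
  simp [Rm, blockR, f1, f2, f3, Prod.ext_iff]
lemma hE77 (g c x3 : ℂ) : Rm g c x3 (2,2) (1,2) = 0 := by
  simp [Rm, blockR, f1, f2, f3, Prod.ext_iff]
lemma hE78 (g c x3 : ℂ) : Rm g c x3 (2,2) (2,0) = 0 := by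
  simp [Rm, blockR, f1, f2, f3, Prod.ext_iff]
lemma hE79 (g c x3 : ℂ) : Rm g c x3 (2,2) (2,1) = 0 := by
  simp [Rm, blockR, f1, f2, f3, Prod.ext_iff]
lemma hE80 (g c x3 : ℂ) : Rm g c x3 (2,2) (2,2) = 1 := by
  simp [Rm, blockR, f1, f2, f3, Prod.ext_iff]

lemma fm0 (h : 0 < 3) : (⟨0, h⟩ : Fin 3) = 0 := rfl
lemma fm1 (h : 1 < 3) : (⟨1, h⟩ : Fin 3) = 1 := rfl
lemma fm2 (h : 2 < 3) : (⟨2, h⟩ : Fin 3) = 2 := rfl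

set_option maxHeartbeats 4000000 in
lemma braidRm (g c x3 : ℂ) : Braid (Rm g c x3) := by
  unfold Braid
  ext ⟨i, j, k⟩ ⟨l, m, n⟩
  rw [lhs_entry, rhs_entry]
  fin_cases i <;> fin_cases j <;> fin_cases k <;> fin_cases l <;> fin_cases m <;> fin_cases n <;>
    simp only [fm0, fm1, fm2] <;>
    first
      | rw [lhs_zero (h := by decide), rhs_zero (h := by decide)]
      | (simp only [Fin.sum_univ_three, hE0, hE1, hE2, hE3, hE4, hE5, hE6, hE7, hE8, hE9, hE10, hE11, hE12, hE13, hE14, hE15, hE16, hE17, hE18, hE19, hE20, hE21, hE22, hE23, hE24, hE25, hE26, hE27, hE28, hE29, hE30, hE31, hE32, hE33, hE34, hE35, hE36, hE37, hE38, hE39, hE40, hE41, hE42, hE43, hE44, hE45, hE46, hE47, hE48, hE49, hE50, hE51, hE52, hE53, hE54, hE55, hE56, hE57, hE58, hE59, hE60, hE61, hE62, hE63, hE64, hE65, hE66, hE67, hE68, hE69, hE70, hE71, hE72, hE73, hE74, hE75, hE76, hE77, hE78, hE79, hE80, mul_zero, zero_mul, add_zero,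
          zero_add, mul_one, one_mul] <;> try ring)

def F9 : ((Fin 3 ⊕ Fin 3) ⊕ Fin 3) ≃ (Fin 3 × Fin 3) where
  toFun s := match s with
    | Sum.inl (Sum.inl k) => ![(0,0),(1,0),(0,1)] k
    | Sum.inl (Sum.inr k) => ![(2,0),(1,1),(0,2)] k
    | Sum.inr k => ![(2,1),(1,2),(2,2)] k
  invFun p := ![![Sum.inl (Sum.inl 0), Sum.inl (Sum.inl 2), Sum.inl (Sum.inr 2)],
                ![Sum.inl (Sum.inl 1), Sum.inl (Sum.inr 1), Sum.inr 1],
                ![Sum.inl (Sum.inr 0), Sum.inr 0, Sum.inr 2]] p.1 p.2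
  left_inv := by decide
  right_inv := by decide

lemma charpoly3 (A : Matrix (Fin 3) (Fin 3) ℂ) :
    A.charpoly = (X - C (A 0 0)) * ((X - C (A 1 1)) * (X - C (A 2 2)) - C (A 1 2) * C (A 2 1))
      + C (A 0 1) * (- C (A 1 0) * (X - C (A 2 2)) - C (A 1 2) * C (A 2 0))
      - C (A 0 2) * (C (A 1 0) * C (A 2 1) + C (A 2 0) * (X - C (A 1 1))) := by
  rw [Matrix.charpoly, Matrix.det_fin_three]
  simp [Matrix.charmatrix_apply_eq, Matrix.charmatrix_apply_ne]
  ring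

set_option maxHeartbeats 1600000 in
lemma charpolyRm (g c x3 : ℂ) :
    (Rm g c x3).charpoly = (X - C 1) ^ 7 * (X + C (g * c * c)) ^ 2 := by
  have h1 : (Matrix.reindex F9.symm F9.symm (Rm g c x3)) =
      Matrix.fromBlocks (Matrix.fromBlocks !![1,0,0;0,1,0;0,0,1] 0 0
          !![1 - g * c * c, 0, g; -x3 * c ^ 2, 1, x3; c ^ 2, 0, 0]) 0 0
          !![1 - g * c * c, g * c, 0; c, 0, 0; 0, 0, 1] := by
    ext i j
    rcases i with (i | i) | i <;> rcases j with (j | j) | j <;>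
      fin_cases i <;> fin_cases j <;>
        simp [F9, Rm, blockR, f1, f2, f3, Prod.ext_iff, Matrix.fromBlocks,
          Matrix.vecHead, Matrix.vecTail]
  have h2 := Matrix.charpoly_reindex (R := ℂ) F9.symm (Rm g c x3)
  rw [← h2, h1, Matrix.charpoly_fromBlocks_zero₂₁, Matrix.charpoly_fromBlocks_zero₂₁,
    charpoly3, charpoly3, charpoly3]
  simp only [Matrix.of_apply, Matrix.cons_val', Matrix.cons_val_zero, Matrix.cons_val_one,
    Matrix.head_cons, Matrix.head_fin_const, Matrix.cons_val_fin_one, Matrix.empty_val',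
    Matrix.cons_val_two, Matrix.tail_cons,
    map_sub, _root_.map_mul, _root_.map_one, _root_.map_zero, map_neg, map_pow, _root_.map_add]
  ring

end Sol521Aux

open Sol521Aux in
/-- solution 5.2.1 satisfies the braid relation and has characteristic
polynomial `(t−1)⁷(t+bc)²`. -/
theorem sol521 (b c x3 : ℂ) (hbc : b * c ≠ 0) :
    Braid (blockR 1 1
      !![1 - b * c, 0, b / c; -x3 * c ^ 2, 1, x3; c ^ 2, 0, 0]
      !![1 - b * c, b; c, 0] 1) ∧
    (blockR 1 1
      !![1 - b * c, 0, b / c; -x3 * c ^ 2, 1, x3; c ^ 2, 0, 0]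
      !![1 - b * c, b; c, 0] 1).charpoly
      = (X - C 1) ^ 7 * (X + C (b * c)) ^ 2 := by
  have hc : c ≠ 0 := fun h => hbc (by rw [h, mul_zero])
  obtain ⟨g, rfl⟩ : ∃ g, b = g * c := ⟨b / c, (div_mul_cancel₀ b hc).symm⟩
  rw [mul_div_cancel_right₀ g hc]
  have hm : blockR 1 1
      !![1 - g * c * c, 0, g; -x3 * c ^ 2, 1, x3; c ^ 2, 0, 0]
      !![1 - g * c * c, g * c; c, 0] 1 = Rm g c x3 := rfl
  rw [hm]
  exact ⟨braidRm g c x3, charpolyRm g c x3⟩
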